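/- Let X_1,…,X_n be non-negative random variables adapted to a filtration (F_t), let τ be a stopping time, and let ν > 0 satisfy ν·X_t ≤ 1 almost surely for all t. Then with probability at least 1 − δ: Σ_{t=1}^τ X_t ≤ 2·Σ_{t=1}^τ E[X_t | F_{t-1}] + log(1/δ)/ν. -/

import Mathlib

open MeasureTheory Finset

private lemma exp_le_one_add_two_mul' {y : ℝ} (h0 : 0 ≤ y) (h1 : y ≤ 1) :
    Real.exp y ≤ 1 + 2 * y := by
  have h := convexOn_exp.2 (Set.mem_univ (0:ℝ)) (Set.mem_univ (1:ℝ))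
    (by linarith : (0:ℝ) ≤ 1 - y) h0 (by ring)
  simp only [smul_eq_mul, mul_zero, mul_one, zero_add, Real.exp_zero] at h
  have he : Real.exp 1 ≤ 3 := by
    have := Real.exp_one_lt_d9; linarith
  nlinarith [Real.exp_pos (1:ℝ)]

/-- Multiplicative Bernstein-type inequality: for adapted non-negative random
variables `X_1, …, X_n` with `ν · X_t ≤ 1` a.s. and a stopping time `τ ≤ n`,
with probability at least `1 - δ`,
`Σ_{t=1}^τ X_t ≤ 2 Σ_{t=1}^τ E[X_t | F_{t-1}] + log(1/δ)/ν`. -/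
theorem statement15 {Ω : Type*} {m0 : MeasurableSpace Ω} (P : Measure Ω)
    [IsProbabilityMeasure P] (n : ℕ) (ℱ : Filtration ℕ m0)
    (X : ℕ → Ω → ℝ) (hadapted : Adapted ℱ X)
    (hint : ∀ t, Integrable (X t) P)
    (hnonneg : ∀ t, ∀ ω, 0 ≤ X t ω)
    (ν : ℝ) (hν : 0 < ν) (hbound : ∀ t, ∀ᵐ ω ∂P, ν * X t ω ≤ 1)
    (τ : Ω → ℕ) (hτ : IsStoppingTime ℱ (fun ω => (τ ω : WithTop ℕ))) (hτn : ∀ ω, τ ω ≤ n)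
    (δ : ℝ) (hδ : δ ∈ Set.Ioo (0 : ℝ) 1) :
    ENNReal.ofReal (1 - δ) ≤
      P {ω | ∑ t ∈ Icc 1 (τ ω), X t ω ≤
        2 * ∑ t ∈ Icc 1 (τ ω), (P[X t | ℱ (t - 1)]) ω + Real.log (1 / δ) / ν} := by
  obtain ⟨hδ0, hδ1⟩ := hδ
  haveI : SigmaFiniteFiltration P ℱ := ⟨fun i => by
    have : IsFiniteMeasure (P.trim (ℱ.le i)) := isFiniteMeasure_trim _
    infer_instance⟩
  set Z : ℕ → Ω → ℝ := fun t ω => Real.exp (ν * ∑ s ∈ Icc 1 t, X s ω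
      - 2 * ν * ∑ s ∈ Icc 1 t, (P[X s | ℱ (s-1)]) ω) with hZdef
  have hZpos : ∀ t ω, 0 < Z t ω := fun t ω => by
    simp only [hZdef]; exact Real.exp_pos _
  -- measurability
  have hSmeas : ∀ t, StronglyMeasurable[ℱ t] (fun ω => ∑ s ∈ Icc 1 t, X s ω) := by
    intro t
    refine Finset.stronglyMeasurable_fun_sum _ fun s hs => ?_
    exact (hadapted s).stronglyMeasurable.mono (ℱ.mono (mem_Icc.mp hs).2)
  have hAmeas : ∀ t, StronglyMeasurable[ℱ t] (fun ω => ∑ s ∈ Icc 1 t, (P[X s | ℱ (s-1)]) ω) := by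
    intro t
    refine Finset.stronglyMeasurable_fun_sum _ fun s hs => ?_
    exact stronglyMeasurable_condExp.mono (ℱ.mono ((Nat.sub_le s 1).trans (mem_Icc.mp hs).2))
  have hZadapted : StronglyAdapted ℱ Z := by
    intro t
    rw [hZdef]
    exact Real.continuous_exp.comp_stronglyMeasurable
      (((hSmeas t).const_mul ν).sub ((hAmeas t).const_mul (2 * ν)))
  -- a.e. bounds
  have hSb : ∀ t, ∀ᵐ ω ∂P, ν * ∑ s ∈ Icc 1 t, X s ω ≤ t := by
    intro t
    filter_upwards [ae_all_iff.2 hbound] with ω hω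
    calc ν * ∑ s ∈ Icc 1 t, X s ω = ∑ s ∈ Icc 1 t, ν * X s ω := by rw [Finset.mul_sum]
      _ ≤ ∑ s ∈ Icc 1 t, (1:ℝ) := Finset.sum_le_sum fun s _ => hω s
      _ ≤ t := by simp [Nat.card_Icc]
  have hAnn : ∀ t, ∀ᵐ ω ∂P, 0 ≤ ∑ s ∈ Icc 1 t, (P[X s | ℱ (s-1)]) ω := by
    intro t
    have h : ∀ᵐ ω ∂P, ∀ s : ℕ, 0 ≤ (P[X s | ℱ (s-1)]) ω :=
      ae_all_iff.2 fun s => condExp_nonneg (ae_of_all _ (hnonneg s))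
    filter_upwards [h] with ω hω
    exact Finset.sum_nonneg fun s _ => hω s
  have hZb : ∀ t, ∀ᵐ ω ∂P, Z t ω ≤ Real.exp t := by
    intro t
    filter_upwards [hSb t, hAnn t] with ω h1 h2
    simp only [hZdef]
    apply Real.exp_le_exp.2
    nlinarith
  have hZint : ∀ t, Integrable (Z t) P := by
    intro t
    refine Integrable.mono' (integrable_const (Real.exp t))
      ((hZadapted t).mono (ℱ.le t)).aestronglyMeasurable ?_
    filter_upwards [hZb t] with ω h
    rwa [Real.norm_eq_abs, abs_of_pos (hZpos t ω)]
  -- supermartingale step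
  have hstep : ∀ t, P[Z (t+1) | ℱ t] ≤ᵐ[P] Z t := by
    intro t
    set c : Ω → ℝ := P[X (t+1) | ℱ t] with hc
    have hcnn : ∀ᵐ ω ∂P, 0 ≤ c ω := condExp_nonneg (ae_of_all _ (hnonneg (t+1)))
    set F : Ω → ℝ := fun ω => Z t ω * Real.exp (-(2*ν) * c ω) with hF
    set G : Ω → ℝ := fun ω => Real.exp (ν * X (t+1) ω) with hG
    have hFmeas : StronglyMeasurable[ℱ t] F :=
      (hZadapted t).mul (Real.continuous_exp.comp_stronglyMeasurable
        (stronglyMeasurable_condExp.const_mul (-(2*ν))))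
    have hGint : Integrable G P := by
      refine Integrable.mono' (integrable_const (Real.exp 1))
        ((Real.continuous_exp.comp_stronglyMeasurable
          (((hadapted (t+1)).stronglyMeasurable.mono (ℱ.le _)).const_mul ν)).aestronglyMeasurable) ?_
      filter_upwards [hbound (t+1)] with ω hω
      rw [hG, Real.norm_eq_abs, abs_of_pos (Real.exp_pos _)]
      exact Real.exp_le_exp.2 hω
    have hFbound : ∀ᵐ ω ∂P, ‖F ω‖ ≤ Real.exp t := by
      filter_upwards [hZb t, hcnn] with ω h1 h2
      rw [hF, Real.norm_eq_abs, abs_of_pos (mul_pos (hZpos t ω) (Real.exp_pos _))]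
      have he1 : Real.exp (-(2*ν) * c ω) ≤ 1 := by
        rw [show (1:ℝ) = Real.exp 0 by simp]
        apply Real.exp_le_exp.2
        nlinarith
      calc Z t ω * Real.exp (-(2*ν) * c ω) ≤ Z t ω * 1 :=
            mul_le_mul_of_nonneg_left he1 (hZpos t ω).le
        _ = Z t ω := mul_one _
        _ ≤ Real.exp t := h1
    have hdecomp : Z (t+1) = fun ω => F ω * G ω := by
      funext ω
      simp only [hZdef, hF, hG]
      rw [Finset.sum_Icc_succ_top (Nat.le_add_left 1 t), Finset.sum_Icc_succ_top
        (Nat.le_add_left 1 t), ← Real.exp_add, ← Real.exp_add]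
      congr 1
      simp only [hc, Nat.add_sub_cancel]
      ring
    have hmul : P[Z (t+1) | ℱ t] =ᵐ[P] fun ω => F ω * (P[G | ℱ t]) ω := by
      rw [hdecomp]
      exact condExp_stronglyMeasurable_mul_of_bound (ℱ.le t) hFmeas hGint (Real.exp t) hFbound
    have hcond : P[G | ℱ t] ≤ᵐ[P] fun ω => Real.exp (2 * ν * c ω) := by
      have h1 : P[G | ℱ t] ≤ᵐ[P] P[(fun _ => (1:ℝ)) + (2*ν) • X (t+1) | ℱ t] := by
        refine condExp_mono hGint ((integrable_const 1).add ((hint (t+1)).smul (2*ν))) ?_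
        filter_upwards [hbound (t+1)] with ω hω
        have h0 : 0 ≤ ν * X (t+1) ω := mul_nonneg hν.le (hnonneg _ _)
        have := exp_le_one_add_two_mul' h0 hω
        simp only [hG, Pi.add_apply, Pi.smul_apply, smul_eq_mul]
        nlinarith
      have h2 : P[(fun _ => (1:ℝ)) + (2*ν) • X (t+1) | ℱ t] =ᵐ[P] fun ω => 1 + 2*ν * c ω := by
        refine (condExp_add (integrable_const 1) ((hint (t+1)).smul (2*ν)) (ℱ t)).trans ?_
        have ha := condExp_smul (μ := P) (m := ℱ t) (2*ν) (X (t+1))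
        have hb := condExp_const (μ := P) (ℱ.le t) (1:ℝ)
        filter_upwards [ha] with ω hω
        simp only [Pi.add_apply, hb, hω, Pi.smul_apply, smul_eq_mul, hc]
      have h3 : (fun ω => 1 + 2 * ν * c ω) ≤ᵐ[P] fun ω => Real.exp (2 * ν * c ω) :=
        ae_of_all _ fun ω => by
          show 1 + 2 * ν * c ω ≤ Real.exp (2 * ν * c ω)
          linarith [Real.add_one_le_exp (2 * ν * c ω)]
      exact h1.trans (h2.le.trans h3)
    refine hmul.le.trans ?_
    filter_upwards [hcond] with ω h2
    calc F ω * (P[G | ℱ t]) ω ≤ F ω * Real.exp (2 * ν * c ω) :=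
          mul_le_mul_of_nonneg_left h2 (mul_pos (hZpos t ω) (Real.exp_pos _)).le
      _ = Z t ω := by
          rw [hF, mul_assoc, ← Real.exp_add, show -(2*ν) * c ω + 2 * ν * c ω = 0 by ring,
            Real.exp_zero, mul_one]
  have hsuper : Supermartingale Z ℱ P := supermartingale_nat hZadapted hZint hstep
  -- optional stopping
  have hZτint : Integrable (stoppedValue Z (fun ω => (τ ω : WithTop ℕ))) P := integrable_stoppedValue ℕ hτ hZint (fun ω => WithTop.coe_le_coe.2 (hτn ω))
  have hos := hsuper.neg.expected_stoppedValue_mono (isStoppingTime_const ℱ 0) hτ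
    (fun ω => WithTop.coe_le_coe.2 (Nat.zero_le _)) (fun ω => WithTop.coe_le_coe.2 (hτn ω))
  have hint1 : ∫ ω, stoppedValue Z (fun ω => (τ ω : WithTop ℕ)) ω ∂P ≤ 1 := by
    have e1 : stoppedValue (-Z) (fun _ : Ω => WithTop.some (0:ℕ)) = fun _ : Ω => (-1 : ℝ) := by
      funext ω; simp [stoppedValue, hZdef]
    have e2 : stoppedValue (-Z) (fun ω => (τ ω : WithTop ℕ)) = fun ω => -(stoppedValue Z (fun ω => (τ ω : WithTop ℕ)) ω) := rfl
    rw [e1, e2] at hos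
    simp only [integral_const, measure_univ, probReal_univ, ENNReal.toReal_one, smul_eq_mul, one_mul,
      integral_neg] at hos
    linarith
  -- Markov
  have hmarkov := mul_meas_ge_le_integral_of_nonneg
    (f := stoppedValue Z (fun ω => (τ ω : WithTop ℕ))) (μ := P) (ae_of_all _ fun ω => (hZpos (τ ω) ω).le) hZτint δ⁻¹
  have hPle : P {ω | δ⁻¹ ≤ stoppedValue Z (fun ω => (τ ω : WithTop ℕ)) ω} ≤ ENNReal.ofReal δ := by
    have h1le : δ⁻¹ * (P {ω | δ⁻¹ ≤ stoppedValue Z (fun ω => (τ ω : WithTop ℕ)) ω}).toReal ≤ 1 := hmarkov.trans hint1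
    have hx : (P {ω | δ⁻¹ ≤ stoppedValue Z (fun ω => (τ ω : WithTop ℕ)) ω}).toReal ≤ δ := by
      have h := mul_le_mul_of_nonneg_left h1le hδ0.le
      rw [← mul_assoc, mul_inv_cancel₀ hδ0.ne', one_mul, mul_one] at h
      exact h
    calc P {ω | δ⁻¹ ≤ stoppedValue Z (fun ω => (τ ω : WithTop ℕ)) ω}
        = ENNReal.ofReal (P {ω | δ⁻¹ ≤ stoppedValue Z (fun ω => (τ ω : WithTop ℕ)) ω}).toReal :=
          (ENNReal.ofReal_toReal (measure_ne_top _ _)).symm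
      _ ≤ ENNReal.ofReal δ := ENNReal.ofReal_le_ofReal hx
  have hmeas : MeasurableSet {ω | δ⁻¹ ≤ stoppedValue Z (fun ω => (τ ω : WithTop ℕ)) ω} := by
    have hm : Measurable (stoppedValue Z (fun ω => (τ ω : WithTop ℕ))) :=
      (measurable_stoppedValue hZadapted.progMeasurable_of_discrete hτ).mono
        hτ.measurableSpace_le le_rfl
    exact measurableSet_le measurable_const hm
  have hsubset : {ω | stoppedValue Z (fun ω => (τ ω : WithTop ℕ)) ω < δ⁻¹} ⊆ {ω | ∑ t ∈ Icc 1 (τ ω), X t ω ≤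
      2 * ∑ t ∈ Icc 1 (τ ω), (P[X t | ℱ (t - 1)]) ω + Real.log (1 / δ) / ν} := by
    intro ω hω
    simp only [Set.mem_setOf_eq] at hω ⊢
    have h : Real.exp (ν * ∑ s ∈ Icc 1 (τ ω), X s ω
        - 2 * ν * ∑ s ∈ Icc 1 (τ ω), (P[X s | ℱ (s-1)]) ω) < δ⁻¹ := hω
    have hlog : ν * ∑ s ∈ Icc 1 (τ ω), X s ω
        - 2 * ν * ∑ s ∈ Icc 1 (τ ω), (P[X s | ℱ (s-1)]) ω < Real.log δ⁻¹ :=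
      (Real.lt_log_iff_exp_lt (inv_pos.2 hδ0)).2 h
    rw [one_div]
    set a := ∑ s ∈ Icc 1 (τ ω), X s ω
    set b := ∑ s ∈ Icc 1 (τ ω), (P[X s | ℱ (s-1)]) ω
    have hd : a - 2 * b < Real.log δ⁻¹ / ν := by
      rw [lt_div_iff₀ hν]
      nlinarith
    linarith
  calc ENNReal.ofReal (1 - δ) = 1 - ENNReal.ofReal δ := by
        rw [ENNReal.ofReal_sub _ hδ0.le, ENNReal.ofReal_one]
    _ ≤ 1 - P {ω | δ⁻¹ ≤ stoppedValue Z (fun ω => (τ ω : WithTop ℕ)) ω} := tsub_le_tsub_left hPle 1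
    _ = P {ω | δ⁻¹ ≤ stoppedValue Z (fun ω => (τ ω : WithTop ℕ)) ω}ᶜ := by
        rw [measure_compl hmeas (measure_ne_top _ _), measure_univ]
    _ ≤ P {ω | ∑ t ∈ Icc 1 (τ ω), X t ω ≤
        2 * ∑ t ∈ Icc 1 (τ ω), (P[X t | ℱ (t - 1)]) ω + Real.log (1 / δ) / ν} := by
        refine measure_mono (fun ω hω => hsubset ?_)
        simpa [Set.mem_compl_iff, not_le] using hω
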